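/- Let Γ be the simple graph on vertices {1,...,7} where {1,2,3} and {4,5,6,7} induce complete subgraphs, vertex 3 is additionally adjacent to vertex 4 only, and there are no other edges. Then the complement of Γ contains no odd cycle, yet Γ has diameter three with the distance from vertex 1 to vertex 7 equal to 3. -/
import Mathlib


/-- The graph `C₁`: vertices `0,...,6` (standing for `1,...,7`), with `{0,1,2}` and
`{3,4,5,6}` inducing complete subgraphs, and the additional edge between `2` and `3`. -/
def graphC1 : SimpleGraph (Fin 7) :=
  SimpleGraph.fromRel (fun v w =>
    (v.val < 3 ∧ w.val < 3) ∨ (3 ≤ v.val ∧ 3 ≤ w.val) ∨ (v.val = 2 ∧ w.val = 3))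

instance : DecidableRel graphC1.Adj := fun a b =>
  decidable_of_iff' _ (SimpleGraph.fromRel_adj _ a b)

/-- 2-coloring of the complement. -/
def colC1 (v : Fin 7) : ZMod 2 := if v.val < 3 then 0 else 1

lemma colC1_ne {u v : Fin 7} (h : graphC1ᶜ.Adj u v) : colC1 u ≠ colC1 v := by
  revert h
  revert u v
  decide

lemma walk_parity {u v : Fin 7} (p : graphC1ᶜ.Walk u v) :
    (p.length : ZMod 2) = colC1 u + colC1 v := by
  induction p with
  | nil =>
    have : ∀ x : ZMod 2, x + x = 0 := by decide
    simp [this]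
  | @cons a b c h p ih =>
    have hne := colC1_ne h
    have key : ∀ x y : ZMod 2, x ≠ y → y + 1 = x := by decide
    simp only [SimpleGraph.Walk.length_cons, Nat.cast_add, Nat.cast_one, ih]
    have := key _ _ hne
    linear_combination this

lemma dist_le_one_hub : ∀ u : Fin 7,
    graphC1.dist u (if u.val < 3 then (2 : Fin 7) else 3) ≤ 1 := by
  intro u
  fin_cases u
  · exact (SimpleGraph.dist_eq_one_iff_adj.mpr (by decide)).le
  · exact (SimpleGraph.dist_eq_one_iff_adj.mpr (by decide)).le
  · simp [SimpleGraph.dist_self]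
  · simp [SimpleGraph.dist_self]
  · exact (SimpleGraph.dist_eq_one_iff_adj.mpr (by decide)).le
  · exact (SimpleGraph.dist_eq_one_iff_adj.mpr (by decide)).le
  · exact (SimpleGraph.dist_eq_one_iff_adj.mpr (by decide)).le

lemma no_short_walk (p : graphC1.Walk 0 6) : 3 ≤ p.length := by
  rcases p with _ | ⟨h1, _ | ⟨h2, _ | ⟨h3, q⟩⟩⟩
  · exact absurd h1 (by decide)
  · have : ∀ a : Fin 7, ¬(graphC1.Adj 0 a ∧ graphC1.Adj a 6) := by decide
    exact absurd ⟨h1, h2⟩ (this _)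
  · simp only [SimpleGraph.Walk.length_cons]
    omega

theorem graphC1_no_odd_cycle_but_diameter_three :
    (¬ ∃ (v : Fin 7) (c : graphC1ᶜ.Walk v v), c.IsCycle ∧ Odd c.length) ∧
    (∀ u v : Fin 7, graphC1.dist u v ≤ 3) ∧
    graphC1.dist 0 6 = 3 := by
  have hpre : graphC1.Preconnected := by decide
  have hconn : graphC1.Connected := ⟨hpre⟩
  refine ⟨?_, ?_, ?_⟩
  · rintro ⟨v, c, -, hodd⟩
    have hp := walk_parity c
    obtain ⟨k, hk⟩ := hodd
    have hxx : ∀ x : ZMod 2, x + x = 0 := by decide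
    rw [hk, hxx] at hp
    push_cast at hp
    have : (2 : ZMod 2) = 0 := by decide
    rw [this] at hp
    simp at hp
  · intro u v
    have t1 := hconn.dist_triangle (u := u)
      (v := if u.val < 3 then (2 : Fin 7) else 3) (w := v)
    have t2 := hconn.dist_triangle (u := if u.val < 3 then (2 : Fin 7) else 3)
      (v := if v.val < 3 then (2 : Fin 7) else 3) (w := v)
    have h1 := dist_le_one_hub u
    have h3 : graphC1.dist (if v.val < 3 then (2 : Fin 7) else 3) v ≤ 1 := by
      rw [SimpleGraph.dist_comm]; exact dist_le_one_hub v
    have h2 : graphC1.dist (if u.val < 3 then (2 : Fin 7) else 3)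
        (if v.val < 3 then (2 : Fin 7) else 3) ≤ 1 := by
      by_cases hu : u.val < 3 <;> by_cases hv : v.val < 3 <;>
        simp only [hu, hv, if_pos, if_neg, if_true, if_false]
      · simp [SimpleGraph.dist_self]
      · exact (SimpleGraph.dist_eq_one_iff_adj.mpr (by decide)).le
      · exact (SimpleGraph.dist_eq_one_iff_adj.mpr (by decide)).le
      · simp [SimpleGraph.dist_self]
    omega
  · have hr : graphC1.Reachable 0 6 := hconn.preconnected 0 6
    obtain ⟨p, hp⟩ := hr.exists_walk_length_eq_dist
    have hle : graphC1.dist 0 6 ≤ 3 := by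
      exact (SimpleGraph.dist_le
        (SimpleGraph.Walk.cons (v := 2) (by decide)
          (SimpleGraph.Walk.cons (v := 3) (by decide)
            (SimpleGraph.Walk.cons (v := 6) (by decide) SimpleGraph.Walk.nil)))).trans
        (by simp)
    have := no_short_walk p
    omega
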